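/- For any ω ∈ S^3 and any polynomial f on ℝ^4 of degree at most t, (1/(t+1)) Σ_{j=0}^{t} f(ω e^{2πij/(t+1)}) = (I_π f)(π(ω)); i.e., the vertices of a regular (t+1)-gon on a Hopf fiber form a t-design on that fiber. -/

import Mathlib

open Real MvPolynomial Complex

/-- A point of `ℝ⁴ ≅ ℂ²` multiplied componentwise by `e^{iθ}` (rotation along the Hopf
fiber through it). -/
noncomputable def hopfRot (x : Fin 4 → ℝ) (θ : ℝ) : Fin 4 → ℝ :=
  ![x 0 * Real.cos θ - x 1 * Real.sin θ, x 0 * Real.sin θ + x 1 * Real.cos θ,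
    x 2 * Real.cos θ - x 3 * Real.sin θ, x 2 * Real.sin θ + x 3 * Real.cos θ]


lemma cast_t1 (t : ℕ) : ((t:ℂ)+1) ≠ 0 := by exact_mod_cast Nat.succ_ne_zero t

lemma avg_exp (t : ℕ) (m : ℤ) (hm : |m| ≤ (t:ℤ)) :
    (1/(t+1):ℂ) * ∑ j ∈ Finset.range (t+1),
        Complex.exp ((m : ℂ) * (2*π*j/(t+1)) * I)
      = (1/(2*(π:ℂ))) * ∫ θ in (0:ℝ)..(2*π), Complex.exp ((m:ℂ) * θ * I) := by
  have hπ : (2*(π:ℂ)) ≠ 0 := by simp [Real.pi_ne_zero]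
  have hne : ((t:ℂ)+1) ≠ 0 := cast_t1 t
  rcases eq_or_ne m 0 with rfl | hm0
  · simp only [Int.cast_zero, zero_mul, Complex.exp_zero, Finset.sum_const,
      Finset.card_range, nsmul_eq_mul, mul_one, intervalIntegral.integral_const,
      smul_eq_mul]
    push_cast
    field_simp
    simp [Complex.real_smul]
  · have h1 : ∑ j ∈ Finset.range (t+1), Complex.exp ((m : ℂ) * (2*π*j/(t+1)) * I) = 0 := by
      have hz : ∀ j : ℕ, Complex.exp ((m : ℂ) * (2*π*j/(t+1)) * I)
          = Complex.exp ((m : ℂ) * (2*π/(t+1)) * I) ^ j := by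
        intro j
        rw [← Complex.exp_nat_mul]
        ring_nf
      simp only [hz]
      set ζ := Complex.exp ((m : ℂ) * (2*π/(t+1)) * I) with hζ
      have hζ1 : ζ ≠ 1 := by
        rw [hζ, Ne, Complex.exp_eq_one_iff]
        rintro ⟨n, hn⟩
        have h2 : (2*(π:ℂ)*I) ≠ 0 := by simp [Real.pi_ne_zero, I_ne_zero]
        have hmn : (m:ℂ) = n * (t+1) := by
          field_simp at hn
          apply mul_right_cancel₀ h2
          linear_combination (2*(π:ℂ)*I) * hn
        have hmn' : m = n * (t+1 : ℕ) := by exact_mod_cast hmn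
        have hd : ((t:ℤ)+1) ∣ m := ⟨n, by push_cast at hmn' ⊢; linarith⟩
        have hle := Int.le_of_dvd (abs_pos.mpr hm0) ((dvd_abs _ _).mpr hd)
        omega
      have hζpow : ζ ^ (t+1) = 1 := by
        rw [hζ, ← Complex.exp_nat_mul]
        have : ((t+1:ℕ) : ℂ) * ((m : ℂ) * (2*π/(t+1)) * I) = (m : ℤ) * (2*π*I) := by
          push_cast
          field_simp
        rw [this, Complex.exp_int_mul_two_pi_mul_I]
      have := geom_sum_eq hζ1 (t+1)
      rw [this, hζpow]
      simp
    have h2 : (∫ θ in (0:ℝ)..(2*π), Complex.exp ((m:ℂ) * θ * I)) = 0 := by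
      have hc : (m : ℂ) * I ≠ 0 := by
        simp [Complex.I_ne_zero, hm0]
      have he : ∀ θ : ℝ, Complex.exp ((m:ℂ) * θ * I) = Complex.exp (((m:ℂ)*I) * θ) := by
        intro θ; ring_nf
      simp only [he]
      rw [integral_exp_mul_complex hc]
      have h3 : (m:ℂ) * I * ((2*π : ℝ) : ℂ) = (m:ℤ) * (2*π*I) := by push_cast; ring
      rw [h3, Complex.exp_int_mul_two_pi_mul_I]
      simp
    rw [h1, h2]; simp


noncomputable def ha (ω : Fin 4 → ℝ) : Fin 4 → ℂ :=
  ![(ω 0 + ω 1 * I)/2, (ω 1 - ω 0 * I)/2, (ω 2 + ω 3 * I)/2, (ω 3 - ω 2 * I)/2]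

noncomputable def hb (ω : Fin 4 → ℝ) : Fin 4 → ℂ :=
  ![(ω 0 - ω 1 * I)/2, (ω 1 + ω 0 * I)/2, (ω 2 - ω 3 * I)/2, (ω 3 + ω 2 * I)/2]

lemma hopf_coord (ω : Fin 4 → ℝ) (θ : ℝ) (i : Fin 4) :
    ((hopfRot ω θ i : ℝ) : ℂ) * Complex.exp (θ * I)
      = ha ω i * Complex.exp (θ * I) ^ 2 + hb ω i := by
  have he : Complex.exp ((θ:ℂ) * I) = Complex.cos (θ:ℂ) + Complex.sin (θ:ℂ) * I :=
    Complex.exp_mul_I _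
  have hpy : Complex.cos (θ:ℂ) ^ 2 + Complex.sin (θ:ℂ) ^ 2 = 1 :=
    Complex.cos_sq_add_sin_sq _
  have hc : ((Real.cos θ : ℝ) : ℂ) = Complex.cos (θ:ℂ) := Complex.ofReal_cos θ
  have hs : ((Real.sin θ : ℝ) : ℂ) = Complex.sin (θ:ℂ) := Complex.ofReal_sin θ
  fin_cases i
  · show ((hopfRot ω θ 0 : ℝ) : ℂ) * Complex.exp ((θ:ℂ) * I) = ha ω 0 * Complex.exp ((θ:ℂ) * I) ^ 2 + hb ω 0
    rw [show hopfRot ω θ 0 = ω 0 * Real.cos θ - ω 1 * Real.sin θ from rfl,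
      show ha ω 0 = ((ω 0 : ℂ) + ω 1 * I)/2 from rfl,
      show hb ω 0 = ((ω 0 : ℂ) - ω 1 * I)/2 from rfl, he]
    push_cast [hc, hs]
    linear_combination ((ω 0 : ℂ) - ω 1 * I)/2 * hpy + (-(ω 0:ℂ) * Complex.sin (θ:ℂ)^2/2 - ω 1 * Complex.cos (θ:ℂ) * Complex.sin (θ:ℂ) - ω 1 * Complex.sin (θ:ℂ)^2 * I/2) * Complex.I_sq
  · show ((hopfRot ω θ 1 : ℝ) : ℂ) * Complex.exp ((θ:ℂ) * I) = ha ω 1 * Complex.exp ((θ:ℂ) * I) ^ 2 + hb ω 1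
    rw [show hopfRot ω θ 1 = ω 0 * Real.sin θ + ω 1 * Real.cos θ from rfl,
      show ha ω 1 = ((ω 1 : ℂ) - ω 0 * I)/2 from rfl,
      show hb ω 1 = ((ω 1 : ℂ) + ω 0 * I)/2 from rfl, he]
    push_cast [hc, hs]
    linear_combination ((ω 1 : ℂ) + ω 0 * I)/2 * hpy + ((ω 0:ℂ) * Complex.sin (θ:ℂ) * Complex.cos (θ:ℂ) + ω 0 * Complex.sin (θ:ℂ)^2 * I/2 - ω 1 * Complex.sin (θ:ℂ)^2/2) * Complex.I_sq
  · show ((hopfRot ω θ 2 : ℝ) : ℂ) * Complex.exp ((θ:ℂ) * I) = ha ω 2 * Complex.exp ((θ:ℂ) * I) ^ 2 + hb ω 2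
    rw [show hopfRot ω θ 2 = ω 2 * Real.cos θ - ω 3 * Real.sin θ from rfl,
      show ha ω 2 = ((ω 2 : ℂ) + ω 3 * I)/2 from rfl,
      show hb ω 2 = ((ω 2 : ℂ) - ω 3 * I)/2 from rfl, he]
    push_cast [hc, hs]
    linear_combination ((ω 2 : ℂ) - ω 3 * I)/2 * hpy + (-(ω 2:ℂ) * Complex.sin (θ:ℂ)^2/2 - ω 3 * Complex.cos (θ:ℂ) * Complex.sin (θ:ℂ) - ω 3 * Complex.sin (θ:ℂ)^2 * I/2) * Complex.I_sq
  · show ((hopfRot ω θ 3 : ℝ) : ℂ) * Complex.exp ((θ:ℂ) * I) = ha ω 3 * Complex.exp ((θ:ℂ) * I) ^ 2 + hb ω 3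
    rw [show hopfRot ω θ 3 = ω 2 * Real.sin θ + ω 3 * Real.cos θ from rfl,
      show ha ω 3 = ((ω 3 : ℂ) - ω 2 * I)/2 from rfl,
      show hb ω 3 = ((ω 3 : ℂ) + ω 2 * I)/2 from rfl, he]
    push_cast [hc, hs]
    linear_combination ((ω 3 : ℂ) + ω 2 * I)/2 * hpy + ((ω 2:ℂ) * Complex.sin (θ:ℂ) * Complex.cos (θ:ℂ) + ω 2 * Complex.sin (θ:ℂ)^2 * I/2 - ω 3 * Complex.sin (θ:ℂ)^2/2) * Complex.I_sq

open Polynomial in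
lemma exists_poly (t : ℕ) (ω : Fin 4 → ℝ) (f : MvPolynomial (Fin 4) ℝ) (hf : f.totalDegree ≤ t) :
    ∃ p : Polynomial ℂ, p.natDegree ≤ 2*t ∧ ∀ θ : ℝ,
      ((MvPolynomial.eval (hopfRot ω θ) f : ℝ) : ℂ) * Complex.exp ((θ:ℂ) * I) ^ t
        = p.eval (Complex.exp ((θ:ℂ) * I)) := by
  classical
  set q : Fin 4 → Polynomial ℂ :=
    fun i => Polynomial.C (ha ω i) * Polynomial.X^2 + Polynomial.C (hb ω i) with hq
  have hdm : ∀ m ∈ f.support, (∑ i, m i) ≤ t := by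
    intro m hm
    have h1 : (m.sum fun _ e => e) ≤ f.totalDegree := MvPolynomial.le_totalDegree hm
    have h2 : (m.sum fun _ e => e) = ∑ i, m i := Finsupp.sum_fintype m _ (fun _ => rfl)
    omega
  refine ⟨∑ m ∈ f.support, Polynomial.C ((MvPolynomial.coeff m f : ℝ) : ℂ)
      * Polynomial.X ^ (t - ∑ i, m i) * ∏ i, (q i) ^ (m i), ?_, ?_⟩
  · apply Polynomial.natDegree_sum_le_of_forall_le
    intro m hm
    have hd := hdm m hm
    calc (Polynomial.C ((MvPolynomial.coeff m f : ℝ) : ℂ)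
          * Polynomial.X ^ (t - ∑ i, m i) * ∏ i, (q i) ^ (m i)).natDegree
        ≤ (Polynomial.C ((MvPolynomial.coeff m f : ℝ) : ℂ)
            * Polynomial.X ^ (t - ∑ i, m i)).natDegree
            + (∏ i, (q i) ^ (m i)).natDegree := Polynomial.natDegree_mul_le
      _ ≤ (t - ∑ i, m i) + ∑ i, ((q i) ^ (m i)).natDegree := by
          gcongr
          · exact (Polynomial.natDegree_C_mul_le _ _).trans (Polynomial.natDegree_X_pow _).le
          · exact Polynomial.natDegree_prod_le _ _
      _ ≤ (t - ∑ i, m i) + ∑ i, (m i) * 2 := by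
          gcongr with i hi
          have hq2 : (q i).natDegree ≤ 2 := by
            refine (Polynomial.natDegree_add_le _ _).trans (max_le ?_ ?_)
            · exact (Polynomial.natDegree_C_mul_le _ _).trans (Polynomial.natDegree_X_pow _).le
            · simp
          exact (Polynomial.natDegree_pow_le).trans (Nat.mul_le_mul_left _ hq2)
      _ ≤ 2 * t := by
          have h2 : ∑ i, (m i) * 2 = (∑ i, m i) * 2 := (Finset.sum_mul _ _ _).symm
          omega
  · intro θ
    set u := Complex.exp ((θ:ℂ) * I) with hu
    have key : ∀ i, (q i).eval u = ((hopfRot ω θ i : ℝ) : ℂ) * u := by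
      intro i
      simp only [hq, Polynomial.eval_add, Polynomial.eval_mul, Polynomial.eval_pow,
        Polynomial.eval_C, Polynomial.eval_X]
      exact (hopf_coord ω θ i).symm
    rw [MvPolynomial.eval_eq']
    push_cast
    rw [Polynomial.eval_finset_sum, Finset.sum_mul]
    refine Finset.sum_congr rfl (fun m hm => ?_)
    have hd := hdm m hm
    simp only [Polynomial.eval_mul, Polynomial.eval_pow, Polynomial.eval_prod,
      Polynomial.eval_C, Polynomial.eval_X, key]
    have hsplit : u ^ t = u ^ (t - ∑ i, m i) * u ^ (∑ i, m i) := by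
      rw [← pow_add, Nat.sub_add_cancel hd]
    simp only [mul_pow, Finset.prod_mul_distrib, Finset.prod_pow_eq_pow_sum]
    rw [hsplit]
    ring

/-- for `ω ∈ S³` and a polynomial `f` on `ℝ⁴` of degree at most `t`, the
average of `f` over the vertices of a regular `(t+1)`-gon on the Hopf fiber through `ω`
equals the average `(I_π f)(π(ω))` of `f` over the whole fiber (a great circle of
circumference `2π`): the `(t+1)`-gon is a `t`-design on the fiber. -/
theorem polygon_design_on_fiber (t : ℕ) (ω : Fin 4 → ℝ)
    (hω : ω 0 ^ 2 + ω 1 ^ 2 + ω 2 ^ 2 + ω 3 ^ 2 = 1)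
    (f : MvPolynomial (Fin 4) ℝ) (hf : f.totalDegree ≤ t) :
    (1 / (t + 1 : ℝ)) * ∑ j ∈ Finset.range (t + 1),
        eval (hopfRot ω (2 * π * j / (t + 1))) f =
      (1 / (2 * π)) * ∫ θ in (0:ℝ)..(2 * π), eval (hopfRot ω θ) f := by
  obtain ⟨p, hdeg, hp⟩ := exists_poly t ω f hf
  -- Fourier representation of the fiber restriction
  have hrep : ∀ θ : ℝ, ((MvPolynomial.eval (hopfRot ω θ) f : ℝ) : ℂ)
      = ∑ k ∈ Finset.range (2*t+1),
          p.coeff k * Complex.exp (((((k:ℤ) - t) : ℤ) : ℂ) * θ * I) := by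
    intro θ
    have hu : Complex.exp ((θ:ℂ) * I) ≠ 0 := Complex.exp_ne_zero _
    apply mul_right_cancel₀ (pow_ne_zero t hu)
    rw [hp θ, Polynomial.eval_eq_sum_range' (lt_of_le_of_lt hdeg (Nat.lt_succ_self _)),
      Finset.sum_mul]
    refine Finset.sum_congr rfl (fun k _ => ?_)
    have h1 : Complex.exp ((θ:ℂ) * I) ^ t = Complex.exp ((t:ℂ) * ((θ:ℂ)*I)) :=
      (Complex.exp_nat_mul _ t).symm
    have h2 : Complex.exp ((θ:ℂ) * I) ^ k = Complex.exp ((k:ℂ) * ((θ:ℂ)*I)) :=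
      (Complex.exp_nat_mul _ k).symm
    rw [mul_assoc, h1, h2, ← Complex.exp_add]
    congr 1
    push_cast
    ring
  -- the complex version of the claim
  have main : ((1 / (t + 1 : ℝ) : ℝ) : ℂ) * ∑ j ∈ Finset.range (t + 1),
        ((MvPolynomial.eval (hopfRot ω (2 * π * j / (t + 1))) f : ℝ) : ℂ) =
      ((1 / (2 * π) : ℝ) : ℂ) * ∫ θ in (0:ℝ)..(2 * π),
        ((MvPolynomial.eval (hopfRot ω θ) f : ℝ) : ℂ) := by
    have cast1 : ∀ j : ℕ, (((2 * π * j / (t + 1) : ℝ)) : ℂ) = 2*(π:ℂ)*j/((t:ℂ)+1) := by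
      intro j; push_cast; ring
    calc ((1 / (t + 1 : ℝ) : ℝ) : ℂ) * ∑ j ∈ Finset.range (t + 1),
            ((MvPolynomial.eval (hopfRot ω (2 * π * j / (t + 1))) f : ℝ) : ℂ)
        = ∑ k ∈ Finset.range (2*t+1), p.coeff k *
            ((1/(t+1):ℂ) * ∑ j ∈ Finset.range (t+1),
              Complex.exp (((((k:ℤ) - t) : ℤ) : ℂ) * (2*π*j/(t+1)) * I)) := by
          simp only [hrep, cast1, Finset.mul_sum]
          rw [Finset.sum_comm]
          refine Finset.sum_congr rfl (fun k _ => ?_)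
          refine Finset.sum_congr rfl (fun j _ => ?_)
          push_cast
          ring
      _ = ∑ k ∈ Finset.range (2*t+1), p.coeff k *
            ((1/(2*(π:ℂ))) * ∫ θ in (0:ℝ)..(2*π),
              Complex.exp (((((k:ℤ) - t) : ℤ) : ℂ) * θ * I)) := by
          refine Finset.sum_congr rfl (fun k hk => ?_)
          rw [avg_exp t ((k:ℤ) - t) (by
            rw [Finset.mem_range] at hk
            rw [abs_le]
            omega)]
      _ = ((1 / (2 * π) : ℝ) : ℂ) * ∫ θ in (0:ℝ)..(2 * π),
            ((MvPolynomial.eval (hopfRot ω θ) f : ℝ) : ℂ) := by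
          have hcont : ∀ k : ℕ, Continuous (fun θ : ℝ =>
              p.coeff k * Complex.exp (((((k:ℤ) - t) : ℤ) : ℂ) * θ * I)) := by
            intro k
            exact continuous_const.mul (Complex.continuous_exp.comp
              ((continuous_const.mul Complex.continuous_ofReal).mul continuous_const))
          rw [intervalIntegral.integral_congr (g := fun θ : ℝ =>
              ∑ k ∈ Finset.range (2*t+1), p.coeff k
                * Complex.exp (((((k:ℤ) - t) : ℤ) : ℂ) * θ * I))
            (fun θ _ => hrep θ)]
          rw [intervalIntegral.integral_finset_sum
            (fun k _ => ((hcont k).intervalIntegrable _ _))]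
          rw [Finset.mul_sum]
          refine (Finset.sum_congr rfl (fun k _ => ?_)).symm
          rw [intervalIntegral.integral_const_mul]
          push_cast
          ring
  -- descend to ℝ
  apply Complex.ofReal_injective
  rw [intervalIntegral.integral_ofReal] at main
  push_cast at main ⊢
  exact main
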